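/- For all x, u ∈ ℝⁿ and all t > 0, the time derivative of the Mehler kernel satisfies ∂ₜKₜ(x,u) = Kₜ(x,u)·Nₜ(x,u), where Nₜ(x,u) = -(1/2)·tr(Qₜ⁻¹ e^{tB} Q e^{tB*}) + (1/2)·|Q^{1/2} e^{tB*} Qₜ⁻¹ (u - Dₜx)|² - ⟨Q_∞ B* Q_∞⁻¹ Dₜx , (Qₜ⁻¹ - Q_∞⁻¹)(u - Dₜx)⟩. -/

import Mathlib

noncomputable section
open MeasureTheory Matrix Real Set

namespace OUMult

variable {n : ℕ}

/-- Euclidean norm on `Fin n → ℝ`. -/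
def enorm (x : Fin n → ℝ) : ℝ := Real.sqrt (∑ i, x i ^ 2)

/-- The matrix `Q_t = ∫₀ᵗ e^{sB} Q e^{sB*} ds`, defined entrywise. -/
def Qt (Q B : Matrix (Fin n) (Fin n) ℝ) (t : ℝ) : Matrix (Fin n) (Fin n) ℝ :=
  Matrix.of fun i j => ∫ s in Set.Ioc (0:ℝ) t,
    (NormedSpace.exp (s • B) * Q * NormedSpace.exp (s • Bᵀ)) i j

/-- The matrix `Q_∞`. -/
def Qinf (Q B : Matrix (Fin n) (Fin n) ℝ) : Matrix (Fin n) (Fin n) ℝ :=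
  Matrix.of fun i j => ∫ s in Set.Ioi (0:ℝ),
    (NormedSpace.exp (s • B) * Q * NormedSpace.exp (s • Bᵀ)) i j

/-- The quadratic form `R(x) = (1/2)⟨Q_∞⁻¹ x, x⟩`. -/
def Rq (Q B : Matrix (Fin n) (Fin n) ℝ) (x : Fin n → ℝ) : ℝ :=
  (1/2) * ((Qinf Q B)⁻¹.mulVec x ⬝ᵥ x)

/-- `D_t = Q_∞ e^{-tB*} Q_∞⁻¹`. -/
def Dm (Q B : Matrix (Fin n) (Fin n) ℝ) (t : ℝ) : Matrix (Fin n) (Fin n) ℝ :=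
  Qinf Q B * NormedSpace.exp ((-t) • Bᵀ) * (Qinf Q B)⁻¹

/-- The Mehler kernel. -/
def K (Q B : Matrix (Fin n) (Fin n) ℝ) (t : ℝ) (x u : Fin n → ℝ) : ℝ :=
  Real.sqrt ((Qinf Q B).det / (Qt Q B t).det) * Real.exp (Rq Q B x) *
    Real.exp (-(1/2) * (((Qt Q B t)⁻¹ - (Qinf Q B)⁻¹).mulVec (u - (Dm Q B t).mulVec x)
      ⬝ᵥ (u - (Dm Q B t).mulVec x)))

/-- All eigenvalues of `B` have negative real part. -/
def NegSpec (B : Matrix (Fin n) (Fin n) ℝ) : Prop :=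
  ∀ μ ∈ spectrum ℂ (B.map Complex.ofReal), μ.re < 0

/-- The invariant measure `γ_∞`. -/
def gamma (Q B : Matrix (Fin n) (Fin n) ℝ) : Measure (Fin n → ℝ) :=
  volume.withDensity fun x => ENNReal.ofReal
    ((2 * π) ^ (-(n:ℝ)/2) * (Qinf Q B).det ^ (-(1:ℝ)/2) * Real.exp (-(Rq Q B x)))

/-- `N_t(x,u) = ∂ₜKₜ(x,u)/Kₜ(x,u)`. -/
def Nf (Q B : Matrix (Fin n) (Fin n) ℝ) (t : ℝ) (x u : Fin n → ℝ) : ℝ :=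
  -(1/2) * Matrix.trace ((Qt Q B t)⁻¹ * (NormedSpace.exp (t • B) * Q * NormedSpace.exp (t • Bᵀ)))
  + (1/2) * (Q.mulVec ((NormedSpace.exp (t • Bᵀ)).mulVec ((Qt Q B t)⁻¹.mulVec (u - (Dm Q B t).mulVec x)))
      ⬝ᵥ (NormedSpace.exp (t • Bᵀ)).mulVec ((Qt Q B t)⁻¹.mulVec (u - (Dm Q B t).mulVec x)))
  - ((Qinf Q B * Bᵀ * (Qinf Q B)⁻¹).mulVec ((Dm Q B t).mulVec x)
      ⬝ᵥ ((Qt Q B t)⁻¹ - (Qinf Q B)⁻¹).mulVec (u - (Dm Q B t).mulVec x))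

theorem det_updateRow_eq_sum (M : Matrix (Fin n) (Fin n) ℝ) (j : Fin n) (v : Fin n → ℝ) :
    ((M.updateRow j v).det) = ∑ i, v i * M.adjugate i j := by
  have hv : v = ∑ i, v i • (Pi.single i (1:ℝ) : Fin n → ℝ) := by
    ext k
    simp [Pi.single_apply]
  calc ((M.updateRow j v).det)
      = (Matrix.detRowAlternating : (Fin n → ℝ) [⋀^Fin n]→ₗ[ℝ] ℝ).toMultilinearMap
        (Function.update M j (∑ i, v i • (Pi.single i (1:ℝ) : Fin n → ℝ))) := by rw [← hv]; rfl
    _ = ∑ i, v i * M.adjugate i j := by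
        erw [MultilinearMap.map_update_sum]
        refine Finset.sum_congr rfl fun i _ => ?_
        rw [show ((Matrix.detRowAlternating : (Fin n → ℝ) [⋀^Fin n]→ₗ[ℝ] ℝ).toMultilinearMap)
          (Function.update M j (v i • (Pi.single i (1:ℝ) : Fin n → ℝ))) =
          ((M.updateRow j (v i • (Pi.single i (1:ℝ) : Fin n → ℝ))).det) from rfl,
          Matrix.det_updateRow_smul, Matrix.adjugate_apply]

theorem detRow_bound (m : Fin n → (Fin n → ℝ)) :
    ‖(Matrix.detRowAlternating : (Fin n → ℝ) [⋀^Fin n]→ₗ[ℝ] ℝ) m‖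
      ≤ (Nat.factorial n) * ∏ i, ‖m i‖ := by
  have : (Matrix.detRowAlternating : (Fin n → ℝ) [⋀^Fin n]→ₗ[ℝ] ℝ) m = (Matrix.of m).det := rfl
  rw [this, Matrix.det_apply']
  calc ‖∑ σ : Equiv.Perm (Fin n), ((Equiv.Perm.sign σ : ℤ) : ℝ) * ∏ i, Matrix.of m (σ i) i‖
      ≤ ∑ σ : Equiv.Perm (Fin n), ‖((Equiv.Perm.sign σ : ℤ) : ℝ) * ∏ i, Matrix.of m (σ i) i‖ :=
        norm_sum_le _ _
    _ ≤ ∑ σ : Equiv.Perm (Fin n), ∏ i, ‖m i‖ := by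
        refine Finset.sum_le_sum fun σ _ => ?_
        have h1 : ‖((Equiv.Perm.sign σ : ℤ) : ℝ) * ∏ i, Matrix.of m (σ i) i‖
            = ‖∏ i, Matrix.of m (σ i) i‖ := by
          rcases Int.units_eq_one_or (Equiv.Perm.sign σ) with h | h <;> simp [h]
        rw [h1]
        calc ‖∏ i, Matrix.of m (σ i) i‖ ≤ ∏ i, ‖m (σ i)‖ := by
              rw [norm_prod]
              exact Finset.prod_le_prod (fun i _ => norm_nonneg _)
                (fun i _ => norm_le_pi_norm (m (σ i)) i)
          _ = ∏ i, ‖m i‖ := Equiv.prod_comp σ (fun i => ‖m i‖)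
    _ = (Nat.factorial n) * ∏ i, ‖m i‖ := by
        rw [Finset.sum_const, Finset.card_univ, Fintype.card_perm, Fintype.card_fin,
          nsmul_eq_mul]

/-- determinant as a continuous multilinear map in the rows -/
def detCMM (n : ℕ) : ContinuousMultilinearMap ℝ (fun _ : Fin n => (Fin n → ℝ)) ℝ :=
  MultilinearMap.mkContinuous
    (Matrix.detRowAlternating : (Fin n → ℝ) [⋀^Fin n]→ₗ[ℝ] ℝ).toMultilinearMap
    (Nat.factorial n) (fun m => detRow_bound m)

theorem hasDerivAt_det {A : ℝ → Matrix (Fin n) (Fin n) ℝ} {A' : Matrix (Fin n) (Fin n) ℝ}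
    {t : ℝ} (h : ∀ i j, HasDerivAt (fun s => A s i j) (A' i j) t) :
    HasDerivAt (fun s => (A s).det) ((Matrix.adjugate (A t) * A').trace) t := by
  have hP : HasDerivAt (fun s => (fun i => A s i : Fin n → Fin n → ℝ)) (fun i => A' i) t :=
    hasDerivAt_pi.2 fun i => hasDerivAt_pi.2 fun j => h i j
  have h2 := ((detCMM n).hasFDerivAt (x := fun i => A t i)).comp_hasDerivAt t hP
  have h3 : (detCMM n).linearDeriv (fun i => A t i) (fun i => A' i)
      = (Matrix.adjugate (A t) * A').trace := by
    rw [ContinuousMultilinearMap.linearDeriv_apply]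
    have key : ∀ j : Fin n, detCMM n (Function.update (fun i => A t i) j (A' j))
        = ((A t).updateRow j (A' j)).det := fun j => rfl
    simp_rw [key, det_updateRow_eq_sum, Matrix.trace, Matrix.diag, Matrix.mul_apply]
    rw [Finset.sum_comm]
    refine Finset.sum_congr rfl fun i _ => Finset.sum_congr rfl fun j _ => mul_comm _ _
  rw [← h3]
  exact h2

def entryLM (i j : Fin n) : Matrix (Fin n) (Fin n) ℝ →ₗ[ℝ] ℝ where
  toFun M := M i j
  map_add' _ _ := rfl
  map_smul' _ _ := rfl

theorem exp_entry_hasDerivAt (X : Matrix (Fin n) (Fin n) ℝ) (t : ℝ) (i j : Fin n) :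
    HasDerivAt (fun s : ℝ => NormedSpace.exp (s • X) i j)
      ((X * NormedSpace.exp (t • X)) i j) t := by
  letI : SeminormedRing (Matrix (Fin n) (Fin n) ℝ) := Matrix.linftyOpSemiNormedRing
  letI : NormedRing (Matrix (Fin n) (Fin n) ℝ) := Matrix.linftyOpNormedRing
  letI : NormedAlgebra ℝ (Matrix (Fin n) (Fin n) ℝ) := Matrix.linftyOpNormedAlgebra
  have h := hasDerivAt_exp_smul_const' (𝕂 := ℝ) X t
  have h2 := (LinearMap.toContinuousLinearMap (entryLM i j)).hasFDerivAt.comp_hasDerivAt t h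
  exact h2

theorem exp_entry_cont (X : Matrix (Fin n) (Fin n) ℝ) (i j : Fin n) :
    Continuous (fun s : ℝ => NormedSpace.exp (s • X) i j) := by
  rw [continuous_iff_continuousAt]
  exact fun s => (exp_entry_hasDerivAt X s i j).continuousAt

theorem F_entry_cont (Q B : Matrix (Fin n) (Fin n) ℝ) (i j : Fin n) :
    Continuous (fun s : ℝ =>
      (NormedSpace.exp (s • B) * Q * NormedSpace.exp (s • Bᵀ)) i j) := by
  simp_rw [Matrix.mul_apply]
  refine continuous_finset_sum _ fun b _ => Continuous.mul ?_ (exp_entry_cont Bᵀ b j)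
  exact continuous_finset_sum _ fun a _ =>
    ((exp_entry_cont B i a).mul continuous_const)


theorem Qt_entry_hasDerivAt (Q B : Matrix (Fin n) (Fin n) ℝ) {t : ℝ} (ht : 0 < t) (i j : Fin n) :
    HasDerivAt (fun s => Qt Q B s i j)
      ((NormedSpace.exp (t • B) * Q * NormedSpace.exp (t • Bᵀ)) i j) t := by
  have h1 := ((F_entry_cont Q B i j).integral_hasStrictDerivAt 0 t).hasDerivAt
  refine h1.congr_of_eventuallyEq ?_
  filter_upwards [isOpen_Ioi.mem_nhds ht] with s hs
  show Qt Q B s i j = _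
  rw [Qt, Matrix.of_apply, intervalIntegral.integral_of_le (le_of_lt hs)]

theorem Qt_transpose (Q B : Matrix (Fin n) (Fin n) ℝ) (hQsymm : Q.IsSymm) (t : ℝ) :
    (Qt Q B t)ᵀ = Qt Q B t := by
  have key : ∀ s : ℝ, (NormedSpace.exp (s • B) * Q * NormedSpace.exp (s • Bᵀ))ᵀ
      = NormedSpace.exp (s • B) * Q * NormedSpace.exp (s • Bᵀ) := by
    intro s
    rw [Matrix.transpose_mul, Matrix.transpose_mul, ← Matrix.exp_transpose,
      ← Matrix.exp_transpose, Matrix.transpose_smul, Matrix.transpose_smul,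
      Matrix.transpose_transpose, hQsymm.eq, Matrix.mul_assoc]
  ext i j
  rw [Matrix.transpose_apply, Qt, Matrix.of_apply, Matrix.of_apply]
  congr 1
  funext s
  conv_lhs => rw [← key s]
  rw [Matrix.transpose_apply]

theorem Qt_posDef (Q B : Matrix (Fin n) (Fin n) ℝ) (hQ : Q.PosDef) (hQsymm : Q.IsSymm)
    {t : ℝ} (ht : 0 < t) : (Qt Q B t).PosDef := by
  refine Matrix.PosDef.of_dotProduct_mulVec_pos ?_ ?_
  · rw [Matrix.IsHermitian]
    rw [show (Qt Q B t)ᴴ = (Qt Q B t)ᵀ from rfl]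
    exact Qt_transpose Q B hQsymm t
  · intro y hy
    have hint : ∀ i j : Fin n, IntegrableOn
        (fun s : ℝ => (NormedSpace.exp (s • B) * Q * NormedSpace.exp (s • Bᵀ)) i j)
        (Set.Ioc 0 t) := fun i j => (F_entry_cont Q B i j).integrableOn_Ioc
    have hform : star y ⬝ᵥ (Qt Q B t) *ᵥ y
        = ∫ s in Set.Ioc (0:ℝ) t,
            y ⬝ᵥ (NormedSpace.exp (s • B) * Q * NormedSpace.exp (s • Bᵀ)) *ᵥ y := by
      simp only [star_trivial, dotProduct, Matrix.mulVec, Qt, Matrix.of_apply]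
      rw [MeasureTheory.integral_finset_sum _ (fun i _ => ?_)]
      swap
      · refine Integrable.const_mul ?_ _
        exact MeasureTheory.integrable_finset_sum _ fun j _ => (hint i j).mul_const _
      refine Finset.sum_congr rfl fun i _ => ?_
      rw [Finset.mul_sum]
      have hterm : ∀ j : Fin n, y i * ((∫ s in Set.Ioc (0:ℝ) t,
            (NormedSpace.exp (s • B) * Q * NormedSpace.exp (s • Bᵀ)) i j) * y j)
          = ∫ s in Set.Ioc (0:ℝ) t,
            y i * ((NormedSpace.exp (s • B) * Q * NormedSpace.exp (s • Bᵀ)) i j * y j) := by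
        intro j
        rw [← MeasureTheory.integral_mul_const, ← MeasureTheory.integral_const_mul]
      simp_rw [hterm]
      rw [← MeasureTheory.integral_finset_sum _
        (fun j _ => (((hint i j).mul_const _).const_mul _))]
      congr 1
      funext s
      rw [Finset.mul_sum]
    rw [hform]
    have hposint : ∀ s : ℝ, s ∈ Set.Ioo 0 t →
        0 < y ⬝ᵥ (NormedSpace.exp (s • B) * Q * NormedSpace.exp (s • Bᵀ)) *ᵥ y := by
      intro s _
      have hz : NormedSpace.exp (s • Bᵀ) *ᵥ y ≠ 0 := by
        intro hz0
        have hiu : IsUnit (NormedSpace.exp (s • Bᵀ)).det :=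
          (Matrix.isUnit_iff_isUnit_det _).mp (Matrix.isUnit_exp _)
        have : y = (NormedSpace.exp (s • Bᵀ))⁻¹ *ᵥ (NormedSpace.exp (s • Bᵀ) *ᵥ y) := by
          rw [Matrix.mulVec_mulVec, Matrix.nonsing_inv_mul _ hiu, Matrix.one_mulVec]
        rw [hz0, Matrix.mulVec_zero] at this
        exact hy this
      have key : y ⬝ᵥ (NormedSpace.exp (s • B) * Q * NormedSpace.exp (s • Bᵀ)) *ᵥ y
          = (NormedSpace.exp (s • Bᵀ) *ᵥ y) ⬝ᵥ Q *ᵥ (NormedSpace.exp (s • Bᵀ) *ᵥ y) := by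
        rw [← Matrix.mulVec_mulVec, ← Matrix.mulVec_mulVec, Matrix.dotProduct_mulVec y,
          ← Matrix.mulVec_transpose, ← Matrix.exp_transpose, Matrix.transpose_smul]
      rw [key]
      simpa using hQ.dotProduct_mulVec_pos hz
    have h2 : (∫ s in Set.Ioc (0:ℝ) t,
        y ⬝ᵥ (NormedSpace.exp (s • B) * Q * NormedSpace.exp (s • Bᵀ)) *ᵥ y)
        = ∫ s in (0:ℝ)..t,
        y ⬝ᵥ (NormedSpace.exp (s • B) * Q * NormedSpace.exp (s • Bᵀ)) *ᵥ y :=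
      (intervalIntegral.integral_of_le (le_of_lt ht)).symm
    rw [h2]
    have hcont : Continuous (fun s : ℝ =>
        y ⬝ᵥ (NormedSpace.exp (s • B) * Q * NormedSpace.exp (s • Bᵀ)) *ᵥ y) := by
      simp only [dotProduct, Matrix.mulVec]
      refine continuous_finset_sum _ fun i _ => Continuous.mul continuous_const ?_
      exact continuous_finset_sum _ fun j _ => (F_entry_cont Q B i j).mul continuous_const
    have := intervalIntegral.intervalIntegral_pos_of_pos_on (hcont.intervalIntegrable 0 t) hposint ht
    simpa using this

theorem hasDerivAt_inv_entry {A : ℝ → Matrix (Fin n) (Fin n) ℝ} {A' : Matrix (Fin n) (Fin n) ℝ}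
    {t : ℝ} (h : ∀ i j, HasDerivAt (fun s => A s i j) (A' i j) t)
    (hdet : (A t).det ≠ 0) :
    ∀ i j, HasDerivAt (fun s => (A s)⁻¹ i j) ((-((A t)⁻¹ * A' * (A t)⁻¹)) i j) t := by
  have hdetD : HasDerivAt (fun s => (A s).det) ((Matrix.adjugate (A t) * A').trace) t :=
    hasDerivAt_det h
  have hadj : ∀ i j, DifferentiableAt ℝ (fun s => (A s).adjugate i j) t := by
    intro i j
    have hupd : ∀ a b, HasDerivAt (fun s => ((A s).updateRow j (Pi.single i 1)) a b)
        ((A'.updateRow j (0 : Fin n → ℝ)) a b) t := by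
      intro a b
      by_cases hab : a = j
      · subst hab
        simp only [Matrix.updateRow_self]
        exact hasDerivAt_const t _
      · simp only [Matrix.updateRow_ne hab]
        exact h a b
    have hd := hasDerivAt_det hupd
    have heq : (fun s => (A s).adjugate i j)
        = fun s => ((A s).updateRow j (Pi.single i 1)).det := by
      funext s; rw [Matrix.adjugate_apply]
    rw [heq]
    exact hd.differentiableAt
  have hinvdiff : ∀ i j, DifferentiableAt ℝ (fun s => (A s)⁻¹ i j) t := by
    intro i j
    have heq : (fun s => (A s)⁻¹ i j) = fun s => ((A s).det)⁻¹ * (A s).adjugate i j := by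
      funext s
      rw [Matrix.inv_def, Matrix.smul_apply, Ring.inverse_eq_inv', smul_eq_mul]
    rw [heq]
    exact (hdetD.differentiableAt.inv hdet).mul (hadj i j)
  set C : Matrix (Fin n) (Fin n) ℝ := Matrix.of fun i j => deriv (fun s => (A s)⁻¹ i j) t with hCdef
  have hCd : ∀ i j, HasDerivAt (fun s => (A s)⁻¹ i j) (C i j) t := fun i j =>
    (hinvdiff i j).hasDerivAt
  have hev : ∀ᶠ s in nhds t, (A s).det ≠ 0 := hdetD.continuousAt.eventually_ne hdet
  have hzero : ∀ i j, HasDerivAt (fun s => ((A s) * (A s)⁻¹) i j) 0 t := by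
    intro i j
    refine (hasDerivAt_const t ((1 : Matrix (Fin n) (Fin n) ℝ) i j)).congr_of_eventuallyEq ?_
    filter_upwards [hev] with s hs
    rw [Matrix.mul_nonsing_inv _ (isUnit_iff_ne_zero.2 hs)]
  have hprod : ∀ i j, HasDerivAt (fun s => ((A s) * (A s)⁻¹) i j)
      ((A' * (A t)⁻¹ + A t * C) i j) t := by
    intro i j
    have heq : (fun s => ((A s) * (A s)⁻¹) i j) = fun s => ∑ k, A s i k * (A s)⁻¹ k j := by
      funext s; rw [Matrix.mul_apply]
    rw [heq]
    have hsum : HasDerivAt (fun s => ∑ k, A s i k * (A s)⁻¹ k j)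
        (∑ k, (A' i k * (A t)⁻¹ k j + A t i k * C k j)) t :=
      HasDerivAt.fun_sum fun k _ => (h i k).mul (hCd k j)
    convert hsum using 1
    simp [Matrix.add_apply, Matrix.mul_apply, Finset.sum_add_distrib]
  have hzerosum : A' * (A t)⁻¹ + A t * C = 0 := by
    ext i j
    have := (hprod i j).unique (hzero i j)
    simpa using this
  have hAtC : A t * C = -(A' * (A t)⁻¹) := by
    have := eq_neg_of_add_eq_zero_right hzerosum
    rw [this]
  have hC2 : C = -((A t)⁻¹ * A' * (A t)⁻¹) := by
    have h1 : (A t)⁻¹ * (A t * C) = C := by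
      rw [← Matrix.mul_assoc, Matrix.nonsing_inv_mul _ (isUnit_iff_ne_zero.2 hdet),
        Matrix.one_mul]
    rw [hAtC] at h1
    rw [← h1, Matrix.mul_neg, Matrix.mul_assoc]
  intro i j
  rw [← hC2]
  exact hCd i j

theorem mulVec_dot_swap (M : Matrix (Fin n) (Fin n) ℝ) (a b : Fin n → ℝ) :
    M.mulVec a ⬝ᵥ b = a ⬝ᵥ Mᵀ.mulVec b := by
  rw [Matrix.dotProduct_mulVec, Matrix.vecMul_transpose]


theorem Qinf_transpose (Q B : Matrix (Fin n) (Fin n) ℝ) (hQsymm : Q.IsSymm) :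
    (Qinf Q B)ᵀ = Qinf Q B := by
  have key : ∀ s : ℝ, (NormedSpace.exp (s • B) * Q * NormedSpace.exp (s • Bᵀ))ᵀ
      = NormedSpace.exp (s • B) * Q * NormedSpace.exp (s • Bᵀ) := by
    intro s
    rw [Matrix.transpose_mul, Matrix.transpose_mul, ← Matrix.exp_transpose,
      ← Matrix.exp_transpose, Matrix.transpose_smul, Matrix.transpose_smul,
      Matrix.transpose_transpose, hQsymm.eq, Matrix.mul_assoc]
  ext i j
  rw [Matrix.transpose_apply, Qinf, Matrix.of_apply, Matrix.of_apply]
  congr 1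
  funext s
  conv_lhs => rw [← key s]
  rw [Matrix.transpose_apply]

/-- Lemma: `∂ₜKₜ(x,u) = Kₜ(x,u)·Nₜ(x,u)`.
For all `x, u ∈ ℝⁿ` and all `t > 0`, the time derivative of the Mehler kernel equals
`Kₜ(x,u) · Nₜ(x,u)`, where `Nₜ` is as in `Nf` (note that
`(1/2)·|Q^{1/2} e^{tB*} Qₜ⁻¹ (u - Dₜx)|² = (1/2)·⟨Q w, w⟩` with
`w = e^{tB*} Qₜ⁻¹ (u - Dₜx)`, since `Q^{1/2}` is symmetric). -/
theorem mehler_deriv_eq_mul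
    (hn : 0 < n) (Q B : Matrix (Fin n) (Fin n) ℝ)
    (hQ : Q.PosDef) (hQsymm : Q.IsSymm) (hB : NegSpec B)
    (x u : Fin n → ℝ) (t : ℝ) (ht : 0 < t) :
    HasDerivAt (fun s => K Q B s x u) (K Q B t x u * Nf Q B t x u) t := by
  classical
  -- notation
  set E : Matrix (Fin n) (Fin n) ℝ := NormedSpace.exp (t • B) with hE
  set E' : Matrix (Fin n) (Fin n) ℝ := NormedSpace.exp (t • Bᵀ) with hE'
  have hET : Eᵀ = E' := by
    rw [hE, hE', ← Matrix.exp_transpose, Matrix.transpose_smul]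
  set F : Matrix (Fin n) (Fin n) ℝ := E * Q * E' with hF
  set At : Matrix (Fin n) (Fin n) ℝ := Qt Q B t with hAt
  set Ai : Matrix (Fin n) (Fin n) ℝ := At⁻¹ with hAi
  set Qi : Matrix (Fin n) (Fin n) ℝ := Qinf Q B with hQidef
  set Qii : Matrix (Fin n) (Fin n) ℝ := Qi⁻¹ with hQiidef
  set Dt : Matrix (Fin n) (Fin n) ℝ := Dm Q B t with hDtdef
  set W : Matrix (Fin n) (Fin n) ℝ := Qi * Bᵀ * Qii with hWdef
  -- basic facts
  have hposdef : At.PosDef := Qt_posDef Q B hQ hQsymm ht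
  have hdA : 0 < At.det := hposdef.det_pos
  have hdetne : At.det ≠ 0 := ne_of_gt hdA
  have hAtT : Atᵀ = At := Qt_transpose Q B hQsymm t
  have hAiT : Aiᵀ = Ai := by
    rw [hAi, Matrix.transpose_nonsing_inv, hAtT]
  have hQiT : Qiᵀ = Qi := Qinf_transpose Q B hQsymm
  have hQiiT : Qiiᵀ = Qii := by
    rw [hQiidef, Matrix.transpose_nonsing_inv, hQiT]
  -- derivatives of the entries of Qt
  have hQtd : ∀ i j, HasDerivAt (fun s => Qt Q B s i j) (F i j) t := fun i j =>
    Qt_entry_hasDerivAt Q B ht i j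
  -- determinant derivative
  have hadjeq : Matrix.adjugate At = At.det • Ai := by
    rw [hAi, Matrix.inv_def, smul_smul, Ring.inverse_eq_inv', mul_inv_cancel₀ hdetne, one_smul]
  have hdetD : HasDerivAt (fun s => (Qt Q B s).det) (At.det * (Ai * F).trace) t := by
    have h1 := hasDerivAt_det hQtd
    rwa [hadjeq, Matrix.smul_mul, Matrix.trace_smul, smul_eq_mul] at h1
  -- inverse derivative
  have hinvd : ∀ i j, HasDerivAt (fun s => (Qt Q B s)⁻¹ i j) ((-(Ai * F * Ai)) i j) t :=
    hasDerivAt_inv_entry hQtd hdetne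
  set M' : Matrix (Fin n) (Fin n) ℝ := -(Ai * F * Ai) with hM'def
  have hMd : ∀ i j, HasDerivAt (fun s => ((Qt Q B s)⁻¹ - Qii) i j) (M' i j) t := by
    intro i j
    have := (hinvd i j).sub_const (Qii i j)
    simpa [Matrix.sub_apply] using this
  -- derivative of the exponential path in Dm
  have hexpD : ∀ i j, HasDerivAt (fun s : ℝ => NormedSpace.exp ((-s) • Bᵀ) i j)
      ((-(Bᵀ * NormedSpace.exp ((-t) • Bᵀ))) i j) t := by
    intro i j
    have h1 := exp_entry_hasDerivAt Bᵀ (-t) i j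
    have h2 := h1.comp t (hasDerivAt_neg t)
    change HasDerivAt (fun s : ℝ => NormedSpace.exp ((-s) • Bᵀ) i j) ((Bᵀ * NormedSpace.exp ((-t) • Bᵀ)) i j * (-1)) t at h2
    have h3 : (Bᵀ * NormedSpace.exp ((-t) • Bᵀ)) i j * (-1)
        = (-(Bᵀ * NormedSpace.exp ((-t) • Bᵀ))) i j := by
      simp [Matrix.neg_apply]
    rw [h3] at h2
    exact h2
  -- derivative of the entries of Dm
  have hDd : ∀ i j, HasDerivAt (fun s => Dm Q B s i j)
      ((-(Qi * Bᵀ * NormedSpace.exp ((-t) • Bᵀ) * Qii)) i j) t := by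
    intro i j
    have heq : (fun s => Dm Q B s i j)
        = fun s => ∑ b, (∑ a, Qi i a * NormedSpace.exp ((-s) • Bᵀ) a b) * Qii b j := by
      funext s
      rw [Dm]
      simp [Matrix.mul_apply, hQidef, hQiidef]
    rw [heq]
    have hsum : HasDerivAt
        (fun s => ∑ b, (∑ a, Qi i a * NormedSpace.exp ((-s) • Bᵀ) a b) * Qii b j)
        (∑ b, (∑ a, Qi i a * (-(Bᵀ * NormedSpace.exp ((-t) • Bᵀ))) a b) * Qii b j) t :=
      HasDerivAt.fun_sum fun b _ =>
        (HasDerivAt.fun_sum fun a _ => (hexpD a b).const_mul (Qi i a)).mul_const (Qii b j)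
    convert hsum using 1
    simp only [Matrix.mul_apply, Matrix.neg_apply, Finset.sum_mul, Finset.mul_sum, neg_mul,
      mul_neg, Finset.sum_neg_distrib]
    congr 1
    refine Finset.sum_congr rfl fun b _ => ?_
    rw [Finset.sum_comm]
    exact Finset.sum_congr rfl fun a _ => Finset.sum_congr rfl fun c _ => by ring
  -- rewrite the Dm derivative matrix
  have hW2 : Qi * Bᵀ * NormedSpace.exp ((-t) • Bᵀ) * Qii = W * Dt := by
    by_cases hu : IsUnit Qi.det
    · rw [hWdef, hDtdef, Dm, ← hQidef, ← hQiidef]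
      simp only [Matrix.mul_assoc]
      rw [← Matrix.mul_assoc Qii Qi, hQiidef, Matrix.nonsing_inv_mul _ hu, Matrix.one_mul]
    · have h0 : Qii = 0 := by
        rw [hQiidef]; exact Matrix.nonsing_inv_apply_not_isUnit _ hu
      rw [hWdef, h0]
      simp [Matrix.mul_zero, Matrix.zero_mul]
  -- derivative of v
  set vt : Fin n → ℝ := u - Dt.mulVec x with hvtdef
  set v' : Fin n → ℝ := (W * Dt).mulVec x with hv'def
  have hvd : ∀ i, HasDerivAt (fun s => (u - (Dm Q B s).mulVec x) i) (v' i) t := by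
    intro i
    have heq : (fun s => (u - (Dm Q B s).mulVec x) i)
        = fun s => u i - ∑ j, Dm Q B s i j * x j := by
      funext s
      simp [Matrix.mulVec, dotProduct]
    rw [heq]
    have hsum : HasDerivAt (fun s => ∑ j, Dm Q B s i j * x j)
        (∑ j, (-(Qi * Bᵀ * NormedSpace.exp ((-t) • Bᵀ) * Qii)) i j * x j) t :=
      HasDerivAt.fun_sum fun j _ => (hDd i j).mul_const (x j)
    have h2 := (hasDerivAt_const t (u i)).sub hsum
    convert h2 using 1
    · rfl
    · rfl
    · rfl
    rw [hv'def, ← hW2]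
    simp [Matrix.mulVec, dotProduct, Matrix.neg_apply]
  -- derivative of the quadratic form g
  set Mt : Matrix (Fin n) (Fin n) ℝ := At⁻¹ - Qii with hMtdef
  have hMtT : Mtᵀ = Mt := by
    rw [hMtdef, Matrix.transpose_sub, Matrix.transpose_nonsing_inv, hAtT, hQiiT]
  set g : ℝ → ℝ := fun s => ((Qt Q B s)⁻¹ - Qii).mulVec (u - (Dm Q B s).mulVec x)
      ⬝ᵥ (u - (Dm Q B s).mulVec x) with hgdef
  set g' : ℝ := M'.mulVec vt ⬝ᵥ vt + Mt.mulVec v' ⬝ᵥ vt + Mt.mulVec vt ⬝ᵥ v' with hg'def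
  have hgd : HasDerivAt g g' t := by
    have hrow : ∀ i, HasDerivAt
        (fun s => ∑ j, ((Qt Q B s)⁻¹ - Qii) i j * ((u - (Dm Q B s).mulVec x) j))
        ((M'.mulVec vt + Mt.mulVec v') i) t := by
      intro i
      have hsum : HasDerivAt
          (fun s => ∑ j, ((Qt Q B s)⁻¹ - Qii) i j * ((u - (Dm Q B s).mulVec x) j))
          (∑ j, (M' i j * vt j + Mt i j * v' j)) t :=
        HasDerivAt.fun_sum fun j _ => by
          have := (hMd i j).mul (hvd j)
          exact this
      convert hsum using 1
      simp [Matrix.mulVec, dotProduct, Pi.add_apply, Finset.sum_add_distrib]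
    have htot : HasDerivAt
        (fun s => ∑ i, (∑ j, ((Qt Q B s)⁻¹ - Qii) i j * ((u - (Dm Q B s).mulVec x) j))
          * ((u - (Dm Q B s).mulVec x) i))
        (∑ i, ((M'.mulVec vt + Mt.mulVec v') i * vt i + (Mt.mulVec vt) i * v' i)) t := by
      refine HasDerivAt.fun_sum fun i _ => ?_
      exact (hrow i).mul (hvd i)
    have hfun : g = fun s => ∑ i,
        (∑ j, ((Qt Q B s)⁻¹ - Qii) i j * ((u - (Dm Q B s).mulVec x) j))
          * ((u - (Dm Q B s).mulVec x) i) := by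
      funext s
      rw [hgdef]
      simp [Matrix.mulVec, dotProduct]
    have hval : g' = ∑ i, ((M'.mulVec vt + Mt.mulVec v') i * vt i + (Mt.mulVec vt) i * v' i) := by
      rw [hg'def]
      simp [dotProduct, Pi.add_apply, Finset.sum_add_distrib, add_mul]
    rw [hfun, hval]
    exact htot
  set w : Fin n → ℝ := E'.mulVec (Ai.mulVec vt) with hwdef
  -- key bilinear identities
  have hid1 : M'.mulVec vt ⬝ᵥ vt = -(Q.mulVec w ⬝ᵥ w) := by
    rw [hM'def, Matrix.neg_mulVec, neg_dotProduct, neg_inj]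
    have hassoc : Ai * F * Ai = Ai * (E * (Q * (E' * Ai))) := by
      rw [hF]; simp only [Matrix.mul_assoc]
    rw [hassoc]
    simp only [← Matrix.mulVec_mulVec]
    rw [mulVec_dot_swap, hAiT, mulVec_dot_swap, hET]
  have hid2 : Mt.mulVec v' ⬝ᵥ vt = W.mulVec (Dt.mulVec x) ⬝ᵥ Mt.mulVec vt := by
    rw [mulVec_dot_swap, hMtT, hv'def, ← Matrix.mulVec_mulVec]
  have hid3 : Mt.mulVec vt ⬝ᵥ v' = W.mulVec (Dt.mulVec x) ⬝ᵥ Mt.mulVec vt := by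
    rw [dotProduct_comm, hv'def, ← Matrix.mulVec_mulVec]
  have hNf : Nf Q B t x u = -(1/2) * (Ai * F).trace + (1/2) * (Q.mulVec w ⬝ᵥ w)
      - (W.mulVec (Dt.mulVec x) ⬝ᵥ Mt.mulVec vt) := rfl
  by_cases hQiPos : 0 < Qi.det
  · -- main case
    have hKfun : (fun s => K Q B s x u) = fun s =>
        Real.sqrt Qi.det / Real.sqrt ((Qt Q B s).det) * Real.exp (Rq Q B x)
          * Real.exp (-(1/2) * g s) := by
      funext s
      rw [K, Real.sqrt_div (le_of_lt hQiPos), hgdef]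
    have hsq : HasDerivAt (fun s => Real.sqrt ((Qt Q B s).det))
        ((1 / (2 * Real.sqrt At.det)) * (At.det * (Ai * F).trace)) t := by
      have h1 := (Real.hasDerivAt_sqrt hdetne).comp t hdetD
      exact h1
    set sA : ℝ := Real.sqrt At.det with hsAdef
    have hsApos : 0 < sA := Real.sqrt_pos.mpr hdA
    have hsAne : sA ≠ 0 := ne_of_gt hsApos
    have hsq2 : sA * sA = At.det := Real.mul_self_sqrt hdA.le
    have hinvs : HasDerivAt (fun s => (Real.sqrt ((Qt Q B s).det))⁻¹)
        (-((1 / (2 * sA)) * (At.det * (Ai * F).trace)) / sA ^ 2) t := hsq.inv hsAne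
    have hphi : HasDerivAt (fun s => Real.sqrt Qi.det / Real.sqrt ((Qt Q B s).det))
        (Real.sqrt Qi.det * (-((1 / (2 * sA)) * (At.det * (Ai * F).trace)) / sA ^ 2)) t := by
      simpa [div_eq_mul_inv] using hinvs.const_mul (Real.sqrt Qi.det)
    have hexpg : HasDerivAt (fun s => Real.exp (-(1/2) * g s))
        (Real.exp (-(1/2) * g t) * (-(1/2) * g')) t := (hgd.const_mul (-(1/2))).exp
    have htotal := (hphi.mul_const (Real.exp (Rq Q B x))).mul hexpg
    rw [hKfun]
    convert htotal using 1
    · rfl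
    · rfl
    · rfl
    have hKt : K Q B t x u = Real.sqrt Qi.det / sA * Real.exp (Rq Q B x)
        * Real.exp (-(1/2) * g t) := by
      have := congrFun hKfun t
      rw [this]
    rw [hKt, hNf, hg'def, hid1, hid2, hid3, ← hsq2]
    field_simp
    rw [Real.sqrt_sq hsApos.le]
    ring
  · -- degenerate case : the kernel vanishes near t
    have hev : ∀ᶠ s in nhds t, 0 < (Qt Q B s).det :=
      hdetD.continuousAt.eventually (eventually_gt_nhds hdA)
    have hK0 : ∀ᶠ s in nhds t, K Q B s x u = 0 := by
      filter_upwards [hev] with s hs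
      have hle : Qi.det / (Qt Q B s).det ≤ 0 :=
        div_nonpos_iff.mpr (Or.inr ⟨le_of_not_gt hQiPos, hs.le⟩)
      rw [K, Real.sqrt_eq_zero'.mpr ?_, zero_mul, zero_mul]
      · exact hle
    have hKt0 : K Q B t x u = 0 := hK0.self_of_nhds
    rw [hKt0, zero_mul]
    refine (hasDerivAt_const t 0).congr_of_eventuallyEq ?_
    filter_upwards [hK0] with s hs
    exact hs

end OUMult
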